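/- Let f(x) = H(1/4 − |x|²) be the characteristic function of the disc of radius 1/2 in ℝ², and let R F(r) = ∫₀^π F(1 + r² + 2r cos θ) dθ denote the (half-)circular transform of a radial function F(|x|²) evaluated at the center (1,0) on the unit circle. Then for r = 1/2 + h with 0 < h small, Rf(1/2 + h) = arccos( ((1/2+h)² + 3/4) / (1 + 2h) ), and this function has the asymptotic expansion √2·h^{1/2} − (17√2/12)·h^{3/2} + (243√2/160)·h^{5/2} + O(h^{7/2}) as h → 0⁺. -/

import Mathlib

open MeasureTheory Real intervalIntegral Asymptotics Filter Topology

lemma aux_inv_sqrt_bounds (s : ℝ) (h0 : 0 ≤ s) (h1 : s ≤ 1/4) :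
    1 + s/2 + 3*s^2/8 ≤ 1 / Real.sqrt (1 - s) ∧
      1 / Real.sqrt (1 - s) ≤ 1 + s/2 + 3*s^2/8 + s^3 := by
  have hs1 : (0:ℝ) < 1 - s := by linarith
  have hw : 0 < Real.sqrt (1 - s) := Real.sqrt_pos.2 hs1
  have hw2 : Real.sqrt (1 - s) ^ 2 = 1 - s := Real.sq_sqrt hs1.le
  have hA : (0:ℝ) ≤ 1 + s/2 + 3*s^2/8 := by nlinarith
  have hB : (0:ℝ) ≤ 1 + s/2 + 3*s^2/8 + s^3 := by nlinarith
  constructor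
  · rw [le_div_iff₀ hw]
    have hsq : ((1 + s/2 + 3*s^2/8) * Real.sqrt (1-s))^2 ≤ 1 := by
      rw [mul_pow, hw2]; nlinarith [sq_nonneg s, sq_nonneg (s^2), sq_nonneg (s^3), pow_nonneg h0 3, pow_nonneg h0 4, pow_nonneg h0 5]
    have := (sq_le_one_iff_abs_le_one _).1 hsq
    calc (1 + s/2 + 3*s^2/8) * Real.sqrt (1-s) ≤ |(1 + s/2 + 3*s^2/8) * Real.sqrt (1-s)| := le_abs_self _
    _ ≤ 1 := this
  · rw [div_le_iff₀ hw]
    have hsq : 1 ≤ ((1 + s/2 + 3*s^2/8 + s^3) * Real.sqrt (1-s))^2 := by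
      rw [mul_pow, hw2]
      nlinarith [sq_nonneg s, sq_nonneg (s^2), sq_nonneg (s^3), pow_nonneg h0 3, pow_nonneg h0 4, pow_nonneg h0 5, pow_nonneg h0 6, pow_nonneg h0 7, sq_nonneg (s^3*(1-4*s))]
    nlinarith [mul_nonneg hB hw.le]


lemma aux_arcsin_bound (x : ℝ) (h0 : 0 ≤ x) (h1 : x ≤ 1/2) :
    |Real.arcsin x - (x + x^3/6 + 3*x^5/40)| ≤ x^7 := by
  set F : ℝ → ℝ := fun t => Real.arcsin t - (t + t^3/6 + 3*t^5/40) with hF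
  set F' : ℝ → ℝ := fun t => 1 / Real.sqrt (1 - t^2) - (1 + t^2/2 + 3*t^4/8) with hF'
  have hderiv : ∀ t ∈ Set.Icc (0:ℝ) x, HasDerivWithinAt F (F' t) (Set.Icc 0 x) t := by
    intro t ht
    have ht1 : t ≠ -1 := by intro h; rw [h] at ht; exact absurd ht.1 (by norm_num)
    have ht2 : t ≠ 1 := by intro h; rw [h] at ht; nlinarith [ht.2]
    have h1 : HasDerivAt Real.arcsin (1 / Real.sqrt (1 - t^2)) t := Real.hasDerivAt_arcsin ht1 ht2
    have h2 : HasDerivAt (fun t : ℝ => t + t^3/6 + 3*t^5/40) (1 + t^2/2 + 3*t^4/8) t := by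
      have := ((hasDerivAt_id t).add ((hasDerivAt_pow 3 t).div_const 6)).add
        (((hasDerivAt_pow 5 t).const_mul 3).div_const 40)
      refine this.congr_deriv ?_
      push_cast; ring
    exact ((h1.sub h2).hasDerivWithinAt)
  have hbound : ∀ t ∈ Set.Icc (0:ℝ) x, ‖F' t‖ ≤ x^6 := by
    intro t ht
    have hs0 : 0 ≤ t^2 := sq_nonneg t
    have htx : t ≤ x := ht.2
    have hs1 : t^2 ≤ 1/4 := by nlinarith [ht.1]
    obtain ⟨hl, hu⟩ := aux_inv_sqrt_bounds (t^2) hs0 hs1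
    rw [hF', Real.norm_eq_abs, abs_le]
    constructor
    all_goals have h6 : t^6 ≤ x^6 := pow_le_pow_left₀ ht.1 htx 6
    · nlinarith [hl, hu]
    · nlinarith [hl, hu]
  have key := Convex.norm_image_sub_le_of_norm_hasDerivWithin_le hderiv hbound
    (convex_Icc 0 x) (Set.left_mem_Icc.2 h0) (Set.right_mem_Icc.2 h0)
  have hF0 : F 0 = 0 := by simp [hF]
  rw [hF0, sub_zero, sub_zero, Real.norm_eq_abs, Real.norm_eq_abs] at key
  calc |Real.arcsin x - (x + x^3/6 + 3*x^5/40)| = |F x| := rfl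
  _ ≤ x^6 * |x| := key
  _ = x^7 := by rw [abs_of_nonneg h0]; ring


lemma aux_double (x : ℝ) (h0 : 0 ≤ x) (h1 : x ≤ 1) :
    Real.arccos (1 - 2*x^2) = 2 * Real.arcsin x := by
  have hc : Real.cos (2 * Real.arcsin x) = 1 - 2*x^2 := by
    rw [Real.cos_two_mul, Real.cos_arcsin, Real.sq_sqrt (by nlinarith : (0:ℝ) ≤ 1 - x^2)]
    ring
  rw [← hc, Real.arccos_cos]
  · linarith [Real.arcsin_nonneg.2 h0]
  · linarith [Real.arcsin_le_pi_div_two x, Real.pi_pos]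

/-- Half-circular transform (at center `(1,0)` on the unit circle) of the
radial function `x ↦ H(1/4 − |x|²)`, the indicator of the disc of radius `1/2`. -/
noncomputable def Rdisc (r : ℝ) : ℝ :=
  ∫ θ in (0:ℝ)..π, (if 1 + r ^ 2 + 2 * r * Real.cos θ ≤ 1/4 then (1:ℝ) else 0)

lemma Rdisc_eq (h : ℝ) (h0 : 0 < h) (h1 : h < 1/4) :
    Rdisc (1/2 + h) = Real.arccos (((1/2 + h) ^ 2 + 3/4) / (1 + 2 * h)) := by
  set c : ℝ := ((1/2 + h) ^ 2 + 3/4) / (1 + 2 * h) with hcdef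
  have hd : (0:ℝ) < 1 + 2*h := by linarith
  have hcd : c * (1 + 2*h) = (1/2 + h)^2 + 3/4 := by
    rw [hcdef, div_mul_cancel₀ _ hd.ne']
  have hc0 : 0 < c := by
    apply div_pos (by nlinarith) hd
  have hc1 : c < 1 := by
    rw [div_lt_one hd]; nlinarith
  set a : ℝ := Real.arccos (-c) with hadef
  have hca : Real.cos a = -c := Real.cos_arccos (by linarith) (by linarith)
  have ha0 : 0 ≤ a := Real.arccos_nonneg _
  have haπ : a ≤ π := Real.arccos_le_pi _
  have key : ∀ θ ∈ Set.Icc (0:ℝ) π,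
      ((1 + (1/2+h) ^ 2 + 2 * (1/2+h) * Real.cos θ ≤ 1/4) ↔ a ≤ θ) := by
    intro θ hθ
    have hiff : Real.cos θ ≤ -c ↔ a ≤ θ := by
      constructor
      · intro hle
        by_contra hlt
        push_neg at hlt
        have := Real.strictAntiOn_cos ⟨hθ.1, hθ.2⟩ ⟨ha0, haπ⟩ hlt
        rw [hca] at this; linarith
      · intro hge
        have := Real.cos_le_cos_of_nonneg_of_le_pi ha0 hθ.2 hge
        rw [hca] at this; linarith
    rw [← hiff]
    constructor <;> intro hle <;> nlinarith [hcd]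
  have hcong : Rdisc (1/2 + h) = ∫ θ in (0:ℝ)..π, (Set.Ici a).indicator (fun _ => (1:ℝ)) θ := by
    apply intervalIntegral.integral_congr
    intro θ hθ
    rw [Set.uIcc_of_le Real.pi_pos.le] at hθ
    simp only [Set.indicator_apply, Set.mem_Ici]
    rw [if_congr (key θ hθ) rfl rfl]
  rw [Rdisc] at hcong
  rw [show Rdisc (1/2 + h) = ∫ θ in (0:ℝ)..π,
      (if 1 + (1/2+h) ^ 2 + 2 * (1/2+h) * Real.cos θ ≤ 1/4 then (1:ℝ) else 0) from rfl] at *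
  rw [hcong, intervalIntegral.integral_of_le Real.pi_pos.le,
    MeasureTheory.setIntegral_indicator measurableSet_Ici]
  have hset : Set.Ioc 0 π ∩ Set.Ici a = Set.Icc a π := by
    ext θ
    simp only [Set.mem_inter_iff, Set.mem_Ici, Set.mem_Ioc, Set.mem_Icc]
    constructor
    · rintro ⟨⟨_, h3⟩, h1⟩; exact ⟨h1, h3⟩
    · rintro ⟨h1, h2⟩
      have ha0' : 0 < a := by
        rw [hadef]; apply Real.arccos_pos.2; linarith
      exact ⟨⟨lt_of_lt_of_le ha0' h1, h2⟩, h1⟩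
  rw [hset]
  simp only [MeasureTheory.setIntegral_const, smul_eq_mul, mul_one]
  rw [Real.volume_real_Icc_of_le (by linarith)]
  rw [hadef, Real.arccos_neg, hcdef]
  ring


lemma aux_sqrtq (h : ℝ) (h0 : 0 ≤ h) (h8 : h ≤ 1/8) :
    |Real.sqrt ((1-h)/(1+2*h)) - (1 - 3*h/2 + 15*h^2/8)| ≤ 4*h^3 := by
  have hd : (0:ℝ) < 1 + 2*h := by linarith
  have hqnn : (0:ℝ) ≤ (1-h)/(1+2*h) := div_nonneg (by linarith) hd.le
  set y := Real.sqrt ((1-h)/(1+2*h)) with hy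
  have hy0 : 0 ≤ y := Real.sqrt_nonneg _
  have hy2 : y^2 * (1+2*h) = 1 - h := by
    rw [Real.sq_sqrt hqnn, div_mul_cancel₀ _ hd.ne']
  set L := 1 - 3*h/2 + 15*h^2/8 - 4*h^3 with hL
  set U := 1 - 3*h/2 + 15*h^2/8 + 4*h^3 with hU
  have hL0 : 0 < L := by rw [hL]; nlinarith
  have hU0 : 0 < U := by rw [hU]; nlinarith
  rw [abs_le]
  constructor
  · have hpl : L^2 * (1+2*h) ≤ 1 - h := by
      rw [hL]
      nlinarith [pow_nonneg h0 3, pow_nonneg h0 4, pow_nonneg h0 5, pow_nonneg h0 6, pow_nonneg h0 7, sq_nonneg h]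
    have hyL : L^2 ≤ y^2 := by nlinarith [hpl, hy2, hd]
    have hLy : L ≤ y := by nlinarith [hyL, hy0, hL0]
    rw [hL] at hLy; linarith
  · have hpu : 1 - h ≤ U^2 * (1+2*h) := by
      rw [hU]
      nlinarith [pow_nonneg h0 3, pow_nonneg h0 4, pow_nonneg h0 5, pow_nonneg h0 6, pow_nonneg h0 7, sq_nonneg h]
    have hyU : y^2 ≤ U^2 := by nlinarith [hpu, hy2, hd]
    have hyU' : y ≤ U := by nlinarith [hyU, hy0, hU0]
    rw [hU] at hyU'; linarith


lemma aux_TM (h : ℝ) (h0 : 0 ≤ h) (h8 : h ≤ 1/8) :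
    |(1 - 3*h/2 + 15*h^2/8) * (1 + h*((1-h)/(1+2*h))/12 + 3*h^2*((1-h)/(1+2*h))^2/160)
      - (1 - 17*h/12 + 243*h^2/160)| ≤ h^3 := by
  have hd : (0:ℝ) < 1 + 2*h := by linarith
  have hid : (1 - 3*h/2 + 15*h^2/8) * (1 + h*((1-h)/(1+2*h))/12 + 3*h^2*((1-h)/(1+2*h))^2/160)
      - (1 - 17*h/12 + 243*h^2/160)
      = h^3*(855/2 + 7455/8*h - 789/4*h^2 + 135/8*h^3) / (480*(1+2*h)^2) := by
    field_simp
    ring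
  rw [hid, abs_div, abs_of_nonneg (by positivity : (0:ℝ) ≤ 480*(1+2*h)^2),
    div_le_iff₀ (by positivity)]
  have h3 : 0 ≤ h^3 := pow_nonneg h0 3
  rw [abs_mul, abs_of_nonneg h3, abs_of_nonneg (by nlinarith [mul_nonneg (sq_nonneg h) h0] : (0:ℝ) ≤ 855/2 + 7455/8*h - 789/4*h^2 + 135/8*h^3)]
  have hN : 855/2 + 7455/8*h - 789/4*h^2 + 135/8*h^3 ≤ 480*(1+2*h)^2 := by
    nlinarith [sq_nonneg h, mul_nonneg (by linarith : (0:ℝ) ≤ 1/8 - h) (sq_nonneg h)]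
  exact mul_le_mul_of_nonneg_left hN h3


set_option maxHeartbeats 2000000 in
lemma aux_pointwise (h : ℝ) (h0 : 0 < h) (h8 : h < 1/8) :
    |Rdisc (1/2 + h) -
        (Real.sqrt 2 * h ^ ((1:ℝ)/2) - (17 * Real.sqrt 2 / 12) * h ^ ((3:ℝ)/2)
          + (243 * Real.sqrt 2 / 160) * h ^ ((5:ℝ)/2))| ≤ 15 * h ^ ((7:ℝ)/2) := by
  have hd : (0:ℝ) < 1 + 2*h := by linarith
  obtain ⟨q, hqdef⟩ : ∃ q : ℝ, (1-h)/(1+2*h) = q := ⟨_, rfl⟩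
  have hq0 : 0 ≤ q := hqdef ▸ div_nonneg (by linarith) hd.le
  have hq1 : q ≤ 1 := by rw [← hqdef, div_le_one hd]; linarith
  obtain ⟨s, hsdef⟩ : ∃ s : ℝ, Real.sqrt (2*h) = s := ⟨_, rfl⟩
  have hs0 : 0 ≤ s := hsdef ▸ Real.sqrt_nonneg _
  have hs2 : s^2 = 2*h := hsdef ▸ Real.sq_sqrt (by linarith)
  have hshalf : s ≤ 1/2 := by nlinarith [hs2, hs0]
  obtain ⟨y, hydef⟩ : ∃ y : ℝ, Real.sqrt q = y := ⟨_, rfl⟩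
  have hy0 : 0 ≤ y := hydef ▸ Real.sqrt_nonneg _
  have hy2 : y^2 = q := hydef ▸ Real.sq_sqrt hq0
  have hy1 : y ≤ 1 := hydef ▸ Real.sqrt_le_one.2 hq1
  obtain ⟨x, hxdef⟩ : ∃ x : ℝ, Real.sqrt (h*(1-h)/(2*(1+2*h))) = x := ⟨_, rfl⟩
  have hx0 : 0 ≤ x := hxdef ▸ Real.sqrt_nonneg _
  have harg : h*(1-h)/(2*(1+2*h)) = (s*y/2)^2 := by
    have : (s*y/2)^2 = s^2*y^2/4 := by ring
    rw [this, hs2, hy2, ← hqdef]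
    field_simp
    ring
  have hxsy : x = s*y/2 := by
    rw [← hxdef, harg, Real.sqrt_sq (by positivity)]
  have hx14 : x ≤ 1/2 := by rw [hxsy]; nlinarith
  have hx2 : x^2 = h*q/2 := by
    rw [hxsy]; linear_combination (y^2/4) * hs2 + (h/2) * hy2
  -- arccos = 2 arcsin x
  have hAC : Rdisc (1/2 + h) = 2 * Real.arcsin x := by
    rw [Rdisc_eq h h0 (by linarith)]
    rw [show ((1/2 + h) ^ 2 + 3/4) / (1 + 2 * h) = 1 - 2*x^2 by
      rw [hx2, ← hqdef]; field_simp; ring]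
    exact aux_double x hx0 (by linarith)
  -- E1
  have E1 : |2 * Real.arcsin x - 2*(x + x^3/6 + 3*x^5/40)| ≤ 2*x^7 := by
    have := aux_arcsin_bound x hx0 hx14
    rw [show 2 * Real.arcsin x - 2*(x + x^3/6 + 3*x^5/40)
        = 2 * (Real.arcsin x - (x + x^3/6 + 3*x^5/40)) by ring, abs_mul, abs_two]
    linarith
  -- E2
  have E2 : 2*(x + x^3/6 + 3*x^5/40) = s*(y*(1 + h*q/12 + 3*h^2*q^2/160)) := by
    rw [hxsy, show h = s^2/2 by linarith [hs2], show q = y^2 from hy2.symm]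
    ring
  -- E3
  have hTM := aux_TM h h0.le h8.le
  rw [hqdef] at hTM
  have hyT := aux_sqrtq h h0.le h8.le
  rw [hqdef, hydef] at hyT
  have hM0 : 0 ≤ 1 + h*q/12 + 3*h^2*q^2/160 := by positivity
  have hM2 : 1 + h*q/12 + 3*h^2*q^2/160 ≤ 2 := by
    have hhq : 0 ≤ h*q := mul_nonneg h0.le hq0
    have h1 : h*q ≤ 1/8 := by
      calc h*q ≤ h*1 := mul_le_mul_of_nonneg_left hq1 h0.le
      _ ≤ 1/8 := by linarith
    have h2 : (h*q)^2 ≤ 1/64 := by nlinarith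
    nlinarith [h1, h2]
  have E3 : |y*(1 + h*q/12 + 3*h^2*q^2/160) - (1 - 17*h/12 + 243*h^2/160)| ≤ 9*h^3 := by
    have key : y*(1 + h*q/12 + 3*h^2*q^2/160) - (1 - 17*h/12 + 243*h^2/160)
        = (y - (1 - 3*h/2 + 15*h^2/8)) * (1 + h*q/12 + 3*h^2*q^2/160)
          + ((1 - 3*h/2 + 15*h^2/8) * (1 + h*q/12 + 3*h^2*q^2/160)
              - (1 - 17*h/12 + 243*h^2/160)) := by ring
    rw [key]
    calc _ ≤ |(y - (1 - 3*h/2 + 15*h^2/8)) * (1 + h*q/12 + 3*h^2*q^2/160)|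
          + |(1 - 3*h/2 + 15*h^2/8) * (1 + h*q/12 + 3*h^2*q^2/160)
              - (1 - 17*h/12 + 243*h^2/160)| := abs_add_le _ _
    _ ≤ 4*h^3 * 2 + h^3 := by
        refine add_le_add ?_ hTM
        rw [abs_mul, abs_of_nonneg hM0]
        exact mul_le_mul hyT hM2 hM0 (by positivity)
    _ = 9*h^3 := by ring
  -- E4
  have E4 : 2*x^7 ≤ s*h^3/8 := by
    have hxs : x ≤ s/2 := by rw [hxsy]; nlinarith
    have hx6 : x^6 ≤ (h/2)^3 := by
      calc x^6 = (x^2)^3 := by ring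
      _ ≤ (h/2)^3 := by
          apply pow_le_pow_left₀ (sq_nonneg x) ?_ 3
          rw [hx2]; nlinarith
    calc 2*x^7 = 2 * (x^6 * x) := by ring
    _ ≤ 2 * ((h/2)^3 * (s/2)) := by
        apply mul_le_mul_of_nonneg_left ?_ (by norm_num)
        exact mul_le_mul hx6 hxs hx0 (by positivity)
    _ = s*h^3/8 := by ring
  -- rpow conversions
  have hsq2 : s = Real.sqrt 2 * Real.sqrt h := by
    rw [← hsdef, Real.sqrt_mul (by norm_num)]
  have h12 : h ^ ((1:ℝ)/2) = Real.sqrt h := (Real.sqrt_eq_rpow h).symm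
  have h32 : h ^ ((3:ℝ)/2) = Real.sqrt h * h := by
    rw [show (3:ℝ)/2 = 1/2 + 1 by norm_num, Real.rpow_add h0, Real.rpow_one, h12]
  have h52 : h ^ ((5:ℝ)/2) = Real.sqrt h * h^2 := by
    rw [show (5:ℝ)/2 = 1/2 + ((2:ℕ):ℝ) by norm_num, Real.rpow_add h0, Real.rpow_natCast, h12]
  have h72 : h ^ ((7:ℝ)/2) = Real.sqrt h * h^3 := by
    rw [show (7:ℝ)/2 = 1/2 + ((3:ℕ):ℝ) by norm_num, Real.rpow_add h0, Real.rpow_natCast, h12]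
  have htarget : Real.sqrt 2 * h ^ ((1:ℝ)/2) - (17 * Real.sqrt 2 / 12) * h ^ ((3:ℝ)/2)
      + (243 * Real.sqrt 2 / 160) * h ^ ((5:ℝ)/2) = s * (1 - 17*h/12 + 243*h^2/160) := by
    rw [h12, h32, h52, hsq2]; ring
  rw [htarget, hAC]
  have chain : |2 * Real.arcsin x - s * (1 - 17*h/12 + 243*h^2/160)| ≤ 10 * (s * h^3) := by
    have split : 2 * Real.arcsin x - s * (1 - 17*h/12 + 243*h^2/160)
        = (2 * Real.arcsin x - 2*(x + x^3/6 + 3*x^5/40))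
          + s * (y*(1 + h*q/12 + 3*h^2*q^2/160) - (1 - 17*h/12 + 243*h^2/160)) := by
      first
      | linear_combination E2
      | linear_combination -E2
    rw [split]
    calc _ ≤ |2 * Real.arcsin x - 2*(x + x^3/6 + 3*x^5/40)|
        + |s * (y*(1 + h*q/12 + 3*h^2*q^2/160) - (1 - 17*h/12 + 243*h^2/160))| := abs_add_le _ _
    _ ≤ 2*x^7 + s * (9*h^3) := by
        refine add_le_add E1 ?_
        rw [abs_mul, abs_of_nonneg hs0]
        exact mul_le_mul_of_nonneg_left E3 hs0
    _ ≤ s*h^3/8 + s * (9*h^3) := by linarith [E4]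
    _ ≤ 10 * (s * h^3) := by nlinarith [mul_nonneg hs0 (pow_nonneg h0.le 3)]
  have hsqrt2 : Real.sqrt 2 ≤ 3/2 := by
    nlinarith [Real.sq_sqrt (by norm_num : (0:ℝ) ≤ 2), Real.sqrt_nonneg 2]
  calc |2 * Real.arcsin x - s * (1 - 17*h/12 + 243*h^2/160)| ≤ 10 * (s * h^3) := chain
  _ = 10 * Real.sqrt 2 * (Real.sqrt h * h^3) := by rw [hsq2]; ring
  _ ≤ 15 * (Real.sqrt h * h^3) := by
      have : 0 ≤ Real.sqrt h * h^3 := by positivity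
      nlinarith [hsqrt2]
  _ = 15 * h ^ ((7:ℝ)/2) := by rw [h72]

/-- For `r = 1/2 + h`, `Rf(1/2+h) = arccos(((1/2+h)² + 3/4)/(1+2h))`, and this has the
expansion `√2 h^{1/2} − (17√2/12) h^{3/2} + (243√2/160) h^{5/2} + O(h^{7/2})` as `h → 0⁺`. -/
theorem Rdisc_arccos_and_expansion :
    (∀ h : ℝ, 0 < h → h < 1/4 →
      Rdisc (1/2 + h) = Real.arccos (((1/2 + h) ^ 2 + 3/4) / (1 + 2 * h))) ∧
    (fun h : ℝ => Rdisc (1/2 + h) -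
        (Real.sqrt 2 * h ^ ((1:ℝ)/2) - (17 * Real.sqrt 2 / 12) * h ^ ((3:ℝ)/2)
          + (243 * Real.sqrt 2 / 160) * h ^ ((5:ℝ)/2)))
      =O[𝓝[>] (0:ℝ)] (fun h : ℝ => h ^ ((7:ℝ)/2)) := by
  constructor
  · exact fun h h0 h1 => Rdisc_eq h h0 h1
  · rw [Asymptotics.isBigO_iff]
    refine ⟨15, ?_⟩
    filter_upwards [Ioo_mem_nhdsGT_of_mem
      (show (0:ℝ) ∈ Set.Ico 0 (1/8) by norm_num)] with h hh
    have hbd := aux_pointwise h hh.1 hh.2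
    rw [Real.norm_eq_abs, Real.norm_eq_abs,
      abs_of_nonneg (Real.rpow_nonneg hh.1.le _)]
    exact hbd
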